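/- Let G be a graph whose components are complete graphs: for each x ∈ 𝒳, the component on vertex set {(x,y) : (x,y) ∈ S_{XY}} is complete. For the distribution p on S_{XY}, the graph entropy satisfies H_G(X,Y) = H(Y|X), the conditional Shannon entropy of Y given X. -/

import Mathlib

open scoped Classical

/-- Graph entropy `H_G(X) = min_{X ∈ W ∈ Γ(G)} I(W;X)`. -/
noncomputable def graphEntropy {V : Type*} [Fintype V]
    (G : SimpleGraph V) (P : V → ℝ) : ℝ :=
  sInf { r : ℝ | ∃ q : V → Finset V → ℝ,
    (∀ v s, 0 ≤ q v s) ∧ (∀ v, ∑ s : Finset V, q v s = 1) ∧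
    (∀ v s, 0 < q v s → v ∈ s ∧ (↑s : Set V).Pairwise (fun a b => ¬ G.Adj a b)) ∧
    r = ∑ v : V, ∑ s : Finset V,
          P v * q v s * Real.log (q v s / (∑ v' : V, P v' * q v' s)) }

set_option linter.unusedSectionVars false

namespace Stmt14Aux

open Finset

set_option linter.unusedSectionVars false

variable {𝒳 𝒴 : Type*} [Fintype 𝒳] [Fintype 𝒴] (p : 𝒳 × 𝒴 → ℝ)

noncomputable def PX (x : 𝒳) : ℝ := ∑ y, p (x, y)

noncomputable def Xpos : Finset 𝒳 := Finset.univ.filter (fun x => 0 < PX p x)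

noncomputable def row (x : 𝒳) : Finset {a : 𝒳 × 𝒴 // 0 < p a} :=
  Finset.univ.filter (fun v => v.1.1 = x)

noncomputable def rr (v : {a : 𝒳 × 𝒴 // 0 < p a}) : ℝ := p v.1 / PX p v.1.1

def Tr (s : Finset {a : 𝒳 × 𝒴 // 0 < p a}) : Prop :=
  (∀ a ∈ s, ∀ b ∈ s, a.1.1 = b.1.1 → a = b) ∧ ∀ x ∈ Xpos p, ∃ a ∈ s, a.1.1 = x

noncomputable def qq (v : {a : 𝒳 × 𝒴 // 0 < p a}) (s : Finset {a : 𝒳 × 𝒴 // 0 < p a}) : ℝ :=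
  if v ∈ s ∧ Tr p s then ∏ w ∈ s.erase v, rr p w else 0

variable (hp0 : ∀ a, 0 ≤ p a)
include hp0

theorem PX_nonneg (x : 𝒳) : 0 ≤ PX p x := Finset.sum_nonneg fun _ _ => hp0 _

theorem PX_pos (v : {a : 𝒳 × 𝒴 // 0 < p a}) : 0 < PX p v.1.1 :=
  lt_of_lt_of_le v.2 (by
    have := Finset.single_le_sum (f := fun y => p (v.1.1, y)) (fun y _ => hp0 _)
      (Finset.mem_univ v.1.2)
    simpa [PX] using this)

theorem rr_pos (v : {a : 𝒳 × 𝒴 // 0 < p a}) : 0 < rr p v :=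
  div_pos v.2 (PX_pos p hp0 v)

theorem fst_mem_Xpos (v : {a : 𝒳 × 𝒴 // 0 < p a}) : v.1.1 ∈ Xpos p := by
  simp [Xpos, PX_pos p hp0 v]

theorem p_eq_PX_mul_rr (v : {a : 𝒳 × 𝒴 // 0 < p a}) : p v.1 = PX p v.1.1 * rr p v := by
  rw [rr, mul_div_cancel₀]
  exact (PX_pos p hp0 v).ne'

theorem sum_row (x : 𝒳) : ∑ w ∈ row p x, p w.1 = PX p x := by
  classical
  have h1 : ∑ w ∈ row p x, p w.1
      = ∑ w : {a : 𝒳 × 𝒴 // 0 < p a}, if w.1.1 = x then p w.1 else 0 := by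
    rw [row, Finset.sum_filter]
  have h2 : ∑ w : {a : 𝒳 × 𝒴 // 0 < p a}, (if w.1.1 = x then p w.1 else 0)
      = ∑ a ∈ Finset.univ.filter (fun a => 0 < p a), (if a.1 = x then p a else 0) := by
    exact (Finset.sum_subtype (p := fun a : 𝒳 × 𝒴 => 0 < p a)
      (Finset.univ.filter fun a => 0 < p a)
      (fun a => by simp) (fun a => if a.1 = x then p a else 0)).symm
  have h3 : ∑ a ∈ Finset.univ.filter (fun a => 0 < p a), (if a.1 = x then p a else 0)
      = ∑ a : 𝒳 × 𝒴, (if a.1 = x then p a else 0) := by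
    apply Finset.sum_subset (Finset.filter_subset _ _)
    intro a _ ha
    simp only [Finset.mem_filter, Finset.mem_univ, true_and, not_lt] at ha
    have : p a = 0 := le_antisymm ha (hp0 a)
    simp [this]
  have h4 : ∑ a : 𝒳 × 𝒴, (if a.1 = x then p a else 0) = PX p x := by
    rw [Fintype.sum_prod_type, Finset.sum_comm]
    simp [PX, Finset.sum_ite_eq']
  rw [h1, h2, h3, h4]

theorem sum_row_rr (x : 𝒳) (hx : x ∈ Xpos p) : ∑ w ∈ row p x, rr p w = 1 := by
  have hxp : 0 < PX p x := by simpa [Xpos] using hx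
  have : ∑ w ∈ row p x, rr p w = (∑ w ∈ row p x, p w.1) / PX p x := by
    rw [Finset.sum_div]
    apply Finset.sum_congr rfl
    intro w hw
    have : w.1.1 = x := by simpa [row] using hw
    rw [rr, this]
  rw [this, sum_row p hp0 x, div_self hxp.ne']

theorem sum_p_subtype (hp1 : ∑ a, p a = 1) : ∑ v : {a : 𝒳 × 𝒴 // 0 < p a}, p v.1 = 1 := by
  classical
  have h2 : ∑ v : {a : 𝒳 × 𝒴 // 0 < p a}, p v.1
      = ∑ a ∈ Finset.univ.filter (fun a => 0 < p a), p a :=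
    (Finset.sum_subtype (p := fun a : 𝒳 × 𝒴 => 0 < p a)
      (Finset.univ.filter fun a => 0 < p a) (fun a => by simp) p).symm
  rw [h2, ← hp1]
  apply Finset.sum_subset (Finset.filter_subset _ _)
  intro a _ ha
  simp only [Finset.mem_filter, Finset.mem_univ, true_and, not_lt] at ha
  exact le_antisymm ha (hp0 a)

theorem sum_PX_Xpos (hp1 : ∑ a, p a = 1) : ∑ x ∈ Xpos p, PX p x = 1 := by
  classical
  have h1 : ∑ x : 𝒳, PX p x = 1 := by
    rw [← hp1, Fintype.sum_prod_type]; rfl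
  rw [← h1]
  apply Finset.sum_subset (Finset.filter_subset _ _)
  intro x _ hx
  simp only [Xpos, Finset.mem_filter, Finset.mem_univ, true_and, not_lt] at hx
  exact le_antisymm hx (PX_nonneg p hp0 x)

theorem qq_sum (v : {a : 𝒳 × 𝒴 // 0 < p a}) :
    ∑ s : Finset {a : 𝒳 × 𝒴 // 0 < p a}, qq p v s = 1 := by
  classical
  set t := (Xpos p).erase v.1.1 with ht
  have hx0 : v.1.1 ∉ t := Finset.notMem_erase _ _
  have htsub : t ⊆ Xpos p := Finset.erase_subset _ _
  have step1 : ∑ s : Finset {a : 𝒳 × 𝒴 // 0 < p a}, qq p v s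
      = ∑ s ∈ Finset.univ.filter (fun s => v ∈ s ∧ Tr p s), ∏ w ∈ s.erase v, rr p w := by
    simp only [qq]
    rw [← Finset.sum_filter]
  have step2 : ∑ g ∈ t.pi (fun x => row p x), ∏ x ∈ t.attach, rr p (g x.1 x.2)
      = ∑ s ∈ Finset.univ.filter (fun s => v ∈ s ∧ Tr p s), ∏ w ∈ s.erase v, rr p w := by
    apply Finset.sum_bij (i := fun g _ => insert v (t.attach.image (fun x => g x.1 x.2)))
    · -- hi : maps into the filter
      intro g hg
      have hgmem := Finset.mem_pi.mp hg
      have hfst : ∀ (x : 𝒳) (hx : x ∈ t), (g x hx).1.1 = x := by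
        intro x hx
        have := hgmem x hx
        simpa [row] using this
      simp only [Finset.mem_filter, Finset.mem_univ, true_and]
      refine ⟨Finset.mem_insert_self _ _, ?_, ?_⟩
      · intro w₁ hw₁ w₂ hw₂ hab
        rcases Finset.mem_insert.mp hw₁ with h1 | h1 <;>
          rcases Finset.mem_insert.mp hw₂ with h2 | h2
        · rw [h1, h2]
        · exfalso
          obtain ⟨x, -, rfl⟩ := Finset.mem_image.mp h2
          rw [h1, hfst x.1 x.2] at hab
          exact hx0 (by rw [hab]; exact x.2)
        · exfalso
          obtain ⟨x, -, rfl⟩ := Finset.mem_image.mp h1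
          rw [h2, hfst x.1 x.2] at hab
          exact hx0 (by rw [← hab]; exact x.2)
        · obtain ⟨x, -, rfl⟩ := Finset.mem_image.mp h1
          obtain ⟨y, -, rfl⟩ := Finset.mem_image.mp h2
          have hxy : x = y := Subtype.ext (by rw [← hfst x.1 x.2, ← hfst y.1 y.2, hab])
          rw [hxy]
      · intro x hx
        by_cases hxv : x = v.1.1
        · exact ⟨v, Finset.mem_insert_self _ _, hxv.symm⟩
        · have hxt : x ∈ t := Finset.mem_erase.mpr ⟨hxv, hx⟩
          exact ⟨g x hxt, Finset.mem_insert_of_mem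
            (Finset.mem_image.mpr ⟨⟨x, hxt⟩, Finset.mem_attach _ _, rfl⟩), hfst x hxt⟩
    · -- i_inj
      intro g₁ hg₁ g₂ hg₂ heq
      have hfst₁ : ∀ (x : 𝒳) (hx : x ∈ t), (g₁ x hx).1.1 = x := by
        intro x hx; have := Finset.mem_pi.mp hg₁ x hx; simpa [row] using this
      have hfst₂ : ∀ (x : 𝒳) (hx : x ∈ t), (g₂ x hx).1.1 = x := by
        intro x hx; have := Finset.mem_pi.mp hg₂ x hx; simpa [row] using this
      funext x hx
      have hmem : g₁ x hx ∈ insert v (t.attach.image (fun y => g₂ y.1 y.2)) := by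
        rw [← heq]
        exact Finset.mem_insert_of_mem (Finset.mem_image.mpr ⟨⟨x, hx⟩, Finset.mem_attach _ _, rfl⟩)
      rcases Finset.mem_insert.mp hmem with hv | him
      · exfalso; apply hx0; rw [← hfst₁ x hx, hv] at hx; exact hx
      · obtain ⟨y, _, hy⟩ := Finset.mem_image.mp him
        have hyx : y.1 = x := by rw [← hfst₂ y.1 y.2, hy, hfst₁ x hx]
        subst hyx
        exact hy.symm
    · -- i_surj
      intro s hs
      simp only [Finset.mem_filter, Finset.mem_univ, true_and] at hs
      obtain ⟨hv, hTr⟩ := hs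
      have exu : ∀ x ∈ t, ∃! a, a ∈ s ∧ a.1.1 = x := by
        intro x hx
        obtain ⟨a, ha, hax⟩ := hTr.2 x (htsub hx)
        exact ⟨a, ⟨ha, hax⟩, fun b hb => hTr.1 b hb.1 a ha (hb.2.trans hax.symm)⟩
      refine ⟨fun x hx => Finset.choose _ s (exu x hx), ?_, ?_⟩
      · apply Finset.mem_pi.mpr
        intro x hx
        have := Finset.choose_property (fun a => a.1.1 = x) s (exu x hx)
        simp [row, this]
      · ext w
        simp only [Finset.mem_insert, Finset.mem_image]
        constructor
        · rintro (rfl | ⟨x, _, rfl⟩)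
          · exact hv
          · exact Finset.choose_mem _ s (exu x.1 x.2)
        · intro hw
          by_cases hwx : w.1.1 = v.1.1
          · left; exact hTr.1 w hw v hv hwx
          · right
            have hwt : w.1.1 ∈ t := Finset.mem_erase.mpr ⟨hwx, fst_mem_Xpos p hp0 w⟩
            refine ⟨⟨w.1.1, hwt⟩, Finset.mem_attach _ _, ?_⟩
            have hcp := Finset.choose_property (fun a => a.1.1 = w.1.1) s (exu w.1.1 hwt)
            have hcm := Finset.choose_mem (fun a => a.1.1 = w.1.1) s (exu w.1.1 hwt)
            exact hTr.1 _ hcm w hw hcp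
    · -- values
      intro g hg
      have hfst : ∀ (x : 𝒳) (hx : x ∈ t), (g x hx).1.1 = x := by
        intro x hx; have := Finset.mem_pi.mp hg x hx; simpa [row] using this
      have hvni : v ∉ t.attach.image (fun x => g x.1 x.2) := by
        intro hmem
        obtain ⟨x, _, hx⟩ := Finset.mem_image.mp hmem
        apply hx0
        rw [← hx] at hx0 ⊢
        rw [hfst x.1 x.2]
        exact x.2
      rw [Finset.erase_insert hvni]
      rw [Finset.prod_image]
      intro x _ y _ hxy
      apply Subtype.ext
      rw [← hfst x.1 x.2, ← hfst y.1 y.2, show g x.1 x.2 = g y.1 y.2 from hxy]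
  have hps := Finset.prod_sum t (fun x => row p x) (fun _ w => rr p w)
  rw [step1, ← step2, ← hps]
  apply Finset.prod_eq_one
  intro x hx
  exact sum_row_rr p hp0 x (htsub hx)

theorem rr_prod_pos (s : Finset {a : 𝒳 × 𝒴 // 0 < p a}) : 0 < ∏ w ∈ s, rr p w :=
  Finset.prod_pos fun w _ => rr_pos p hp0 w

theorem qq_nonneg (v : {a : 𝒳 × 𝒴 // 0 < p a}) (s : Finset {a : 𝒳 × 𝒴 // 0 < p a}) :
    0 ≤ qq p v s := by
  rw [qq]
  split
  · exact le_of_lt (Finset.prod_pos fun w _ => rr_pos p hp0 w)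
  · exact le_refl 0
    
theorem qq_cond (v : {a : 𝒳 × 𝒴 // 0 < p a}) (s : Finset {a : 𝒳 × 𝒴 // 0 < p a})
    (h : 0 < qq p v s) : v ∈ s ∧ Tr p s := by
  by_cases h' : v ∈ s ∧ Tr p s
  · exact h'
  · rw [qq, if_neg h'] at h; exact absurd h (lt_irrefl 0)

theorem qq_eq (v : {a : 𝒳 × 𝒴 // 0 < p a}) (s : Finset {a : 𝒳 × 𝒴 // 0 < p a})
    (hv : v ∈ s) (hTr : Tr p s) : qq p v s = (∏ w ∈ s, rr p w) / rr p v := by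
  rw [qq, if_pos ⟨hv, hTr⟩, eq_div_iff (rr_pos p hp0 v).ne', mul_comm]
  exact Finset.mul_prod_erase s _ hv

theorem Q_eq (hp1 : ∑ a, p a = 1) (s : Finset {a : 𝒳 × 𝒴 // 0 < p a}) (hTr : Tr p s) :
    ∑ v' : {a : 𝒳 × 𝒴 // 0 < p a}, p v'.1 * qq p v' s = ∏ w ∈ s, rr p w := by
  classical
  have h1 : ∀ v' : {a : 𝒳 × 𝒴 // 0 < p a}, p v'.1 * qq p v' s
      = if v' ∈ s then PX p v'.1.1 * ∏ w ∈ s, rr p w else 0 := by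
    intro v'
    by_cases hv : v' ∈ s
    · rw [if_pos hv, qq_eq p hp0 v' s hv hTr, p_eq_PX_mul_rr p hp0 v']
      have hne := (rr_pos p hp0 v').ne'
      field_simp
    · rw [if_neg hv, qq, if_neg (fun hc => hv hc.1), mul_zero]
  rw [Finset.sum_congr rfl (fun v' _ => h1 v'), Finset.sum_ite_mem, Finset.univ_inter]
  have himg : s.image (fun w => w.1.1) = Xpos p := by
    ext x
    simp only [Finset.mem_image]
    constructor
    · rintro ⟨w, _, rfl⟩; exact fst_mem_Xpos p hp0 w
    · intro hx
      obtain ⟨a, ha, hax⟩ := hTr.2 x hx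
      exact ⟨a, ha, hax⟩
  have hsum : ∑ v' ∈ s, PX p v'.1.1 = 1 := by
    rw [← sum_PX_Xpos p hp0 hp1, ← himg, Finset.sum_image (fun a ha b hb hab => hTr.1 a ha b hb hab)]
  rw [← Finset.sum_mul, hsum, one_mul]

theorem value_eq (hp1 : ∑ a, p a = 1) :
    (∑ v : {a : 𝒳 × 𝒴 // 0 < p a}, ∑ s : Finset {a : 𝒳 × 𝒴 // 0 < p a},
        p v.1 * qq p v s * Real.log (qq p v s /
          (∑ v' : {a : 𝒳 × 𝒴 // 0 < p a}, p v'.1 * qq p v' s)))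
      = -∑ v : {a : 𝒳 × 𝒴 // 0 < p a}, p v.1 * Real.log (rr p v) := by
  classical
  have hv : ∀ v : {a : 𝒳 × 𝒴 // 0 < p a},
      (∑ s : Finset {a : 𝒳 × 𝒴 // 0 < p a},
        p v.1 * qq p v s * Real.log (qq p v s /
          (∑ v' : {a : 𝒳 × 𝒴 // 0 < p a}, p v'.1 * qq p v' s)))
      = -(p v.1 * Real.log (rr p v)) := by
    intro v
    have hterm : ∀ s : Finset {a : 𝒳 × 𝒴 // 0 < p a},
        p v.1 * qq p v s * Real.log (qq p v s /
          (∑ v' : {a : 𝒳 × 𝒴 // 0 < p a}, p v'.1 * qq p v' s))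
        = (p v.1 * -Real.log (rr p v)) * qq p v s := by
      intro s
      by_cases h : 0 < qq p v s
      · obtain ⟨hvs, hTr⟩ := qq_cond p hp0 v s h
        have hQ := Q_eq p hp0 hp1 s hTr
        have hR := (rr_prod_pos p hp0 s).ne'
        have hrv := (rr_pos p hp0 v).ne'
        have hdiv : qq p v s / (∑ v' : {a : 𝒳 × 𝒴 // 0 < p a}, p v'.1 * qq p v' s)
            = (rr p v)⁻¹ := by
          rw [qq_eq p hp0 v s hvs hTr, hQ]
          field_simp
        rw [hdiv, Real.log_inv]
        ring
      · have h0 : qq p v s = 0 := le_antisymm (not_lt.1 h) (qq_nonneg p hp0 v s)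
        rw [h0]
        ring_nf
    rw [Finset.sum_congr rfl (fun s _ => hterm s), ← Finset.mul_sum, qq_sum p hp0 v, mul_one]
    ring
  rw [Finset.sum_congr rfl (fun v _ => hv v), Finset.sum_neg_distrib]

theorem rhs_eq :
    -∑ a : 𝒳 × 𝒴, p a * Real.log (p a / ∑ y : 𝒴, p (a.1, y))
      = -∑ v : {a : 𝒳 × 𝒴 // 0 < p a}, p v.1 * Real.log (rr p v) := by
  classical
  congr 1
  have h2 : ∑ v : {a : 𝒳 × 𝒴 // 0 < p a}, p v.1 * Real.log (rr p v)
      = ∑ a ∈ Finset.univ.filter (fun a => 0 < p a), p a * Real.log (p a / PX p a.1) :=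
    (Finset.sum_subtype (p := fun a : 𝒳 × 𝒴 => 0 < p a)
      (Finset.univ.filter fun a => 0 < p a) (fun a => by simp)
      (fun a => p a * Real.log (p a / PX p a.1))).symm
  rw [h2]
  refine (Finset.sum_subset (Finset.filter_subset _ _) ?_).symm
  intro a _ ha
  simp only [Finset.mem_filter, Finset.mem_univ, true_and, not_lt] at ha
  have : p a = 0 := le_antisymm ha (hp0 a)
  simp [this]

theorem sum_PX_univ (hp1 : ∑ a, p a = 1) : ∑ x : 𝒳, PX p x = 1 := by
  rw [← hp1, Fintype.sum_prod_type]; rfl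

theorem lower_bound (hp1 : ∑ a, p a = 1) (q : {a : 𝒳 × 𝒴 // 0 < p a} → Finset {a : 𝒳 × 𝒴 // 0 < p a} → ℝ)
    (h0 : ∀ v s, 0 ≤ q v s) (h1 : ∀ v, ∑ s : Finset {a : 𝒳 × 𝒴 // 0 < p a}, q v s = 1)
    (h2 : ∀ v s, 0 < q v s → v ∈ s ∧
      (↑s : Set {a : 𝒳 × 𝒴 // 0 < p a}).Pairwise (fun a b => ¬(a ≠ b ∧ a.1.1 = b.1.1))) :
    -∑ v : {a : 𝒳 × 𝒴 // 0 < p a}, p v.1 * Real.log (rr p v)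
      ≤ ∑ v : {a : 𝒳 × 𝒴 // 0 < p a}, ∑ s : Finset {a : 𝒳 × 𝒴 // 0 < p a},
          p v.1 * q v s * Real.log (q v s /
            (∑ v' : {a : 𝒳 × 𝒴 // 0 < p a}, p v'.1 * q v' s)) := by
  classical
  set Q : Finset {a : 𝒳 × 𝒴 // 0 < p a} → ℝ :=
    fun s => ∑ v' : {a : 𝒳 × 𝒴 // 0 < p a}, p v'.1 * q v' s with hQdef
  have hQ0 : ∀ s, 0 ≤ Q s := fun s =>
    Finset.sum_nonneg fun v' _ => mul_nonneg (le_of_lt v'.2) (h0 v' s)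
  have hQtot : ∑ s : Finset {a : 𝒳 × 𝒴 // 0 < p a}, Q s = 1 := by
    rw [hQdef]
    rw [Finset.sum_comm]
    simp_rw [← Finset.mul_sum, h1, mul_one]
    exact sum_p_subtype p hp0 hp1
  have hQpos : ∀ v s, 0 < q v s → 0 < Q s := by
    intro v s h
    exact lt_of_lt_of_le (mul_pos v.2 h)
      (Finset.single_le_sum (f := fun v' : {a : 𝒳 × 𝒴 // 0 < p a} => p v'.1 * q v' s)
        (fun v' _ => mul_nonneg (le_of_lt v'.2) (h0 v' s)) (Finset.mem_univ v))
  have hterm : ∀ v s, p v.1 * q v s - (if 0 < q v s then PX p v.1.1 * Q s else 0)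
      ≤ p v.1 * q v s * Real.log (q v s / Q s) + p v.1 * q v s * Real.log (rr p v) := by
    intro v s
    by_cases h : 0 < q v s
    · rw [if_pos h]
      have hQs := hQpos v s h
      have hrv := rr_pos p hp0 v
      have hpv := v.2
      have hPXv := PX_pos p hp0 v
      have hlog : Real.log (q v s / Q s) + Real.log (rr p v)
          = Real.log (q v s * rr p v / Q s) := by
        rw [← Real.log_mul (by positivity) hrv.ne']
        congr 1
        field_simp
      have hx : 0 < q v s * rr p v / Q s := by positivity
      have hlb := Real.one_sub_inv_le_log_of_pos hx
      have hmul := mul_le_mul_of_nonneg_left hlb (le_of_lt (mul_pos hpv h))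
      have hPX : p v.1 / rr p v = PX p v.1.1 := by
        rw [rr]
        field_simp
      have hcalc : p v.1 * q v s * (1 - (q v s * rr p v / Q s)⁻¹)
          = p v.1 * q v s - PX p v.1.1 * Q s := by
        rw [mul_sub, mul_one]
        congr 1
        rw [← hPX]
        field_simp
      rw [← mul_add, hlog]
      rw [hcalc] at hmul
      exact hmul
    · have h0' : q v s = 0 := le_antisymm (not_lt.1 h) (h0 v s)
      rw [if_neg h, h0']
      simp
  have hA : ∑ v : {a : 𝒳 × 𝒴 // 0 < p a}, ∑ s : Finset {a : 𝒳 × 𝒴 // 0 < p a},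
      p v.1 * q v s = 1 := by
    simp_rw [← Finset.mul_sum, h1, mul_one]
    exact sum_p_subtype p hp0 hp1
  have hB : ∑ v : {a : 𝒳 × 𝒴 // 0 < p a}, ∑ s : Finset {a : 𝒳 × 𝒴 // 0 < p a},
      (if 0 < q v s then PX p v.1.1 * Q s else 0) ≤ 1 := by
    rw [Finset.sum_comm]
    have hs : ∀ s, ∑ v : {a : 𝒳 × 𝒴 // 0 < p a},
        (if 0 < q v s then PX p v.1.1 * Q s else 0) ≤ Q s := by
      intro s
      have heq : ∑ v : {a : 𝒳 × 𝒴 // 0 < p a}, (if 0 < q v s then PX p v.1.1 * Q s else 0)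
          = (∑ v ∈ Finset.univ.filter (fun v => 0 < q v s), PX p v.1.1) * Q s := by
        rw [Finset.sum_mul, Finset.sum_filter]
      rw [heq]
      have hPXb : (∑ v ∈ Finset.univ.filter (fun v => 0 < q v s), PX p v.1.1) ≤ 1 := by
        by_cases hne : (Finset.univ.filter (fun v : {a : 𝒳 × 𝒴 // 0 < p a} => 0 < q v s)).Nonempty
        · obtain ⟨v₀, hv₀⟩ := hne
          have hv₀' : 0 < q v₀ s := (Finset.mem_filter.mp hv₀).2
          obtain ⟨-, hpair⟩ := h2 v₀ s hv₀'
          have hsub : ∀ v ∈ Finset.univ.filter (fun v : {a : 𝒳 × 𝒴 // 0 < p a} => 0 < q v s),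
              v ∈ s := fun v hv => (h2 v s (Finset.mem_filter.mp hv).2).1
          have hinj : ∀ a ∈ Finset.univ.filter (fun v : {a : 𝒳 × 𝒴 // 0 < p a} => 0 < q v s),
              ∀ b ∈ Finset.univ.filter (fun v : {a : 𝒳 × 𝒴 // 0 < p a} => 0 < q v s),
              a.1.1 = b.1.1 → a = b := by
            intro a ha b hb hab
            by_contra hne'
            exact (hpair (hsub a ha) (hsub b hb) hne') ⟨hne', hab⟩
          rw [← Finset.sum_image hinj]
          calc ∑ x ∈ Finset.image (fun w => w.1.1)
                (Finset.univ.filter (fun v : {a : 𝒳 × 𝒴 // 0 < p a} => 0 < q v s)), PX p x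
              ≤ ∑ x : 𝒳, PX p x :=
                Finset.sum_le_sum_of_subset_of_nonneg (Finset.subset_univ _)
                  (fun x _ _ => PX_nonneg p hp0 x)
            _ = 1 := sum_PX_univ p hp0 hp1
        · rw [Finset.not_nonempty_iff_eq_empty] at hne
          rw [hne]
          simp
      calc (∑ v ∈ Finset.univ.filter (fun v => 0 < q v s), PX p v.1.1) * Q s
          ≤ 1 * Q s := mul_le_mul_of_nonneg_right hPXb (hQ0 s)
        _ = Q s := one_mul _
    calc ∑ s : Finset {a : 𝒳 × 𝒴 // 0 < p a}, ∑ v : {a : 𝒳 × 𝒴 // 0 < p a},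
          (if 0 < q v s then PX p v.1.1 * Q s else 0)
        ≤ ∑ s : Finset {a : 𝒳 × 𝒴 // 0 < p a}, Q s := Finset.sum_le_sum fun s _ => hs s
      _ = 1 := hQtot
  have hsum : ∑ v : {a : 𝒳 × 𝒴 // 0 < p a}, ∑ s : Finset {a : 𝒳 × 𝒴 // 0 < p a},
        (p v.1 * q v s - (if 0 < q v s then PX p v.1.1 * Q s else 0))
      ≤ ∑ v : {a : 𝒳 × 𝒴 // 0 < p a}, ∑ s : Finset {a : 𝒳 × 𝒴 // 0 < p a},
        (p v.1 * q v s * Real.log (q v s / Q s) + p v.1 * q v s * Real.log (rr p v)) :=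
    Finset.sum_le_sum fun v _ => Finset.sum_le_sum fun s _ => hterm v s
  have hL : ∑ v : {a : 𝒳 × 𝒴 // 0 < p a}, ∑ s : Finset {a : 𝒳 × 𝒴 // 0 < p a},
      p v.1 * q v s * Real.log (rr p v)
      = ∑ v : {a : 𝒳 × 𝒴 // 0 < p a}, p v.1 * Real.log (rr p v) := by
    apply Finset.sum_congr rfl
    intro v _
    have : ∀ s, p v.1 * q v s * Real.log (rr p v)
        = (p v.1 * Real.log (rr p v)) * q v s := fun s => by ring
    rw [Finset.sum_congr rfl (fun s _ => this s), ← Finset.mul_sum, h1, mul_one]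
  rw [Finset.sum_congr rfl (fun v (_ : v ∈ Finset.univ) => Finset.sum_sub_distrib ..)] at hsum
  rw [Finset.sum_congr rfl (fun v (_ : v ∈ Finset.univ) => Finset.sum_add_distrib ..)] at hsum
  rw [Finset.sum_sub_distrib, Finset.sum_add_distrib, hA, hL] at hsum
  linarith

end Stmt14Aux


/-- Let `G` be the graph on the support `S_{XY} = {(x,y) : p(x,y)>0}`
whose components are the complete graphs on the rows `{(x,y) ∈ S_{XY}}` (i.e.
two distinct support points are adjacent iff they share the first coordinate).
Then `H_G(X,Y) = H(Y|X) = -Σ_{(x,y)} p(x,y) log (p(x,y)/p(x))`. -/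
theorem stmt14 {𝒳 𝒴 : Type*} [Fintype 𝒳] [Fintype 𝒴]
    (p : 𝒳 × 𝒴 → ℝ) (hp0 : ∀ a, 0 ≤ p a) (hp1 : ∑ a, p a = 1)
    (G : SimpleGraph {a : 𝒳 × 𝒴 // 0 < p a})
    (hG : ∀ u v, G.Adj u v ↔ u ≠ v ∧ u.val.1 = v.val.1) :
    graphEntropy G (fun v => p v.val) =
      -∑ a : 𝒳 × 𝒴, p a * Real.log (p a / ∑ y : 𝒴, p (a.1, y)) := by
  classical
  rw [graphEntropy, Stmt14Aux.rhs_eq p hp0]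
  set L := -∑ v : {a : 𝒳 × 𝒴 // 0 < p a}, p v.1 * Real.log (Stmt14Aux.rr p v) with hLdef
  set S := { r : ℝ | ∃ q : {a : 𝒳 × 𝒴 // 0 < p a} → Finset {a : 𝒳 × 𝒴 // 0 < p a} → ℝ,
    (∀ v s, 0 ≤ q v s) ∧ (∀ v, ∑ s : Finset {a : 𝒳 × 𝒴 // 0 < p a}, q v s = 1) ∧
    (∀ v s, 0 < q v s → v ∈ s ∧
      (↑s : Set {a : 𝒳 × 𝒴 // 0 < p a}).Pairwise (fun a b => ¬ G.Adj a b)) ∧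
    r = ∑ v : {a : 𝒳 × 𝒴 // 0 < p a}, ∑ s : Finset {a : 𝒳 × 𝒴 // 0 < p a},
          (fun v => p v.val) v * q v s * Real.log (q v s /
            (∑ v' : {a : 𝒳 × 𝒴 // 0 < p a}, (fun v => p v.val) v' * q v' s)) } with hSdef
  have hmem : L ∈ S := by
    refine ⟨Stmt14Aux.qq p, Stmt14Aux.qq_nonneg p hp0, Stmt14Aux.qq_sum p hp0, ?_, ?_⟩
    · intro v s h
      obtain ⟨hvs, hTr⟩ := Stmt14Aux.qq_cond p hp0 v s h
      refine ⟨hvs, ?_⟩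
      intro a ha b hb hne hadj
      rw [hG] at hadj
      exact hne (hTr.1 a ha b hb hadj.2)
    · exact (Stmt14Aux.value_eq p hp0 hp1).symm
  have hlb : ∀ r ∈ S, L ≤ r := by
    rintro r ⟨q, h0, h1, h2, rfl⟩
    refine le_trans (le_of_eq hLdef) ?_
    have h2' : ∀ v s, 0 < q v s → v ∈ s ∧
        (↑s : Set {a : 𝒳 × 𝒴 // 0 < p a}).Pairwise
          (fun a b => ¬(a ≠ b ∧ a.1.1 = b.1.1)) := by
      intro v s h
      refine ⟨(h2 v s h).1, ?_⟩
      intro a ha b hb hne hcon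
      exact (h2 v s h).2 ha hb hne ((hG a b).mpr hcon)
    exact Stmt14Aux.lower_bound p hp0 hp1 q h0 h1 h2'
  exact le_antisymm (csInf_le ⟨L, hlb⟩ hmem) (le_csInf ⟨L, hmem⟩ hlb)
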